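/- Let K be a nontrivial abelian group. Then there exists a family ⟨φ_α : ω₁ × α → K | α < ω₁⟩ such that: (coherence modulo finitely many rows) for all α ≤ β < ω₁ the set {η < ω₁ : φ_α(η,ξ) ≠ φ_β(η,ξ) for some ξ < α} is finite; and (nontriviality) there is no function ψ : ω₁ × ω₁ → K such that for every α < ω₁ the set {η < ω₁ : ψ(η,ξ) ≠ φ_α(η,ξ) for some ξ < α} is finite. -/

import Mathlib

open Cardinal

noncomputable section StmtEight
universe u
attribute [local instance] Classical.propDecidable

/-- finite-to-one below `α` -/
private def FinTo (α : Ordinal.{u}) (g : Ordinal.{u} → ℕ) : Prop :=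
  ∀ n : ℕ, {ξ : Ordinal | ξ < α ∧ g ξ ≤ n}.Finite

/-- `g` and `h` agree below `β` except at finitely many places -/
private def Coh (β : Ordinal.{u}) (g h : Ordinal.{u} → ℕ) : Prop :=
  {ξ : Ordinal | ξ < β ∧ g ξ ≠ h ξ}.Finite

private lemma coh_self (β : Ordinal.{u}) (g : Ordinal.{u} → ℕ) : Coh β g g := by
  have : {ξ : Ordinal | ξ < β ∧ g ξ ≠ g ξ} = ∅ := by ext; simp
  rw [Coh, this]; exact Set.finite_empty

private lemma finite_Iio_natCast (n : ℕ) : (Set.Iio ((n : ℕ) : Ordinal.{u})).Finite := by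
  have hsub : Set.Iio ((n : ℕ) : Ordinal.{u}) ⊆ (fun m : ℕ => (m : Ordinal.{u})) '' (Set.Iio n) := by
    intro ξ hξ
    have hω : ξ < Ordinal.omega0 := lt_of_lt_of_le hξ (le_of_lt (Ordinal.nat_lt_omega0 n))
    obtain ⟨m, rfl⟩ := Ordinal.lt_omega0.mp hω
    refine ⟨m, ?_, rfl⟩
    simp only [Set.mem_Iio] at hξ ⊢
    exact_mod_cast hξ
  exact ((Set.finite_Iio n).image _).subset hsub

private lemma countable_Iio_of_lt_omega1 {α : Ordinal.{u}} (hα : α < (aleph 1).ord) :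
    (Set.Iio α).Countable := by
  have h1 : α.card < ℵ₁ := Cardinal.lt_ord.mp hα
  have h2 : α.card ≤ ℵ₀ := by
    rwa [← succ_aleph0, Order.lt_succ_iff] at h1
  rw [← Cardinal.le_aleph0_iff_set_countable, Ordinal.mk_Iio_ordinal]
  exact Cardinal.lift_le_aleph0.mpr h2

private lemma step (α : Ordinal.{u}) (hα : α < (aleph 1).ord)
    (g : ∀ β, β < α → Ordinal.{u} → ℕ)
    (h1 : ∀ β hβ, FinTo β (g β hβ))
    (h2 : ∀ β γ hβ hγ, β ≤ γ → Coh β (g β hβ) (g γ hγ)) :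
    ∃ h : Ordinal.{u} → ℕ, FinTo α h ∧ ∀ β hβ, Coh β (g β hβ) h := by
  classical
  rcases Ordinal.zero_or_succ_or_isSuccLimit α with h0 | ⟨γ, rfl⟩ | hlim
  · refine ⟨fun _ => 0, ?_, ?_⟩
    · intro n
      subst h0
      have : {ξ : Ordinal | ξ < 0 ∧ (0:ℕ) ≤ n} = ∅ := by
        ext ξ; simp [(zero_le (a := ξ)).not_gt]
      rw [this]; exact Set.finite_empty
    · intro β hβ
      subst h0
      exact absurd hβ (zero_le (a := β)).not_gt
  · refine ⟨g γ (Order.lt_succ γ), ?_, ?_⟩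
    · intro n
      have hsub : {ξ : Ordinal | ξ < Order.succ γ ∧ g γ (Order.lt_succ γ) ξ ≤ n} ⊆
          {ξ : Ordinal | ξ < γ ∧ g γ (Order.lt_succ γ) ξ ≤ n} ∪ {γ} := by
        intro ξ ⟨hξ, hg⟩
        rcases lt_or_eq_of_le (Order.lt_succ_iff.mp hξ) with h | h
        · exact Or.inl ⟨h, hg⟩
        · exact Or.inr (by simp [h])
      exact ((h1 γ (Order.lt_succ γ) n).union (Set.finite_singleton γ)).subset hsub
    · intro β hβ
      exact h2 β γ hβ (Order.lt_succ γ) (Order.lt_succ_iff.mp hβ)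
  · -- limit case
    obtain ⟨f, hf⟩ := Set.countable_iff_exists_subset_range.mp (countable_Iio_of_lt_omega1 hα)
    set c : ℕ → Ordinal := fun n => Nat.rec 0
      (fun m cm => max cm (if f m < α then f m else 0) + 1) n with hc
    have hc_succ : ∀ m, c (m+1) = max (c m) (if f m < α then f m else 0) + 1 := fun m => rfl
    have hc_lt : ∀ n, c n < α := by
      intro n; induction n with
      | zero => exact hlim.pos
      | succ m ih =>
        have hb : (if f m < α then f m else 0) < α := by
          split
          · assumption
          · exact hlim.pos
        have hmax : max (c m) (if f m < α then f m else 0) < α := max_lt ih hb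
        rw [hc_succ, Ordinal.add_one_eq_succ]
        exact hlim.succ_lt hmax
    have hex : ∀ ξ : Ordinal, ξ < α → ∃ n, ξ < c n := by
      intro ξ hξ
      obtain ⟨n, hn⟩ := hf (Set.mem_Iio.mpr hξ)
      refine ⟨n + 1, ?_⟩
      have hsel : (if f n < α then f n else 0) = ξ := by rw [hn, if_pos hξ]
      rw [hc_succ, Ordinal.add_one_eq_succ, Order.lt_succ_iff, ← hsel]
      exact le_max_right _ _
    refine ⟨fun ξ => if hξ : ξ < α then
        max (g (c (Nat.find (hex ξ hξ))) (hc_lt _) ξ) (Nat.find (hex ξ hξ)) else 0, ?_, ?_⟩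
    · -- FinTo
      intro n
      have hfin : ∀ m : ℕ, {ξ : Ordinal | ξ < c m ∧ g (c m) (hc_lt m) ξ ≤ n}.Finite :=
        fun m => h1 (c m) (hc_lt m) n
      refine (Set.Finite.biUnion (Set.finite_Iio (n+1)) (fun m _ => hfin m)).subset ?_
      rintro ξ ⟨hξα, hle⟩
      simp only [dif_pos hξα] at hle
      have hm1 : ξ < c (Nat.find (hex ξ hξα)) := Nat.find_spec (hex ξ hξα)
      rw [max_le_iff] at hle
      exact Set.mem_biUnion (Set.mem_Iio.mpr (Nat.lt_succ_of_le hle.2)) ⟨hm1, hle.1⟩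
    · -- Coh
      intro β hβ
      obtain ⟨Kn, hK⟩ := hex β hβ
      have hDm : ∀ m : ℕ,
          {ξ : Ordinal | ξ < β ∧ ξ < c m ∧ g β hβ ξ ≠ g (c m) (hc_lt m) ξ}.Finite := by
        intro m
        rcases le_total β (c m) with hle | hle
        · exact (h2 β (c m) hβ (hc_lt m) hle).subset (fun ξ hξ => ⟨hξ.1, hξ.2.2⟩)
        · exact (h2 (c m) β (hc_lt m) hβ hle).subset (fun ξ hξ => ⟨hξ.2.1, hξ.2.2.symm⟩)
      have hEm : ∀ m : ℕ, {ξ : Ordinal | ξ < c m ∧ g (c m) (hc_lt m) ξ ≤ m}.Finite :=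
        fun m => h1 (c m) (hc_lt m) m
      refine (Set.Finite.biUnion (Set.finite_Iio (Kn+1))
        (fun m _ => (hDm m).union (hEm m))).subset ?_
      rintro ξ ⟨hξβ, hne⟩
      have hξα : ξ < α := hξβ.trans hβ
      simp only [dif_pos hξα] at hne
      have hm1 : ξ < c (Nat.find (hex ξ hξα)) := Nat.find_spec (hex ξ hξα)
      have hmK : Nat.find (hex ξ hξα) ≤ Kn := Nat.find_le (hξβ.trans hK)
      refine Set.mem_biUnion (Set.mem_Iio.mpr (Nat.lt_succ_of_le hmK)) ?_
      by_cases hgg : g β hβ ξ = g (c (Nat.find (hex ξ hξα))) (hc_lt _) ξ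
      · right
        refine ⟨hm1, ?_⟩
        by_contra hlt
        push_neg at hlt
        exact hne (by rw [hgg, max_eq_left (le_of_lt hlt)])
      · exact Or.inl ⟨hξβ, hm1, hgg⟩

/-- a coherent, finite-to-one (below each countable ordinal) family, defined by
transfinite recursion -/
private def F : Ordinal.{u} → (Ordinal.{u} → ℕ) :=
  Ordinal.lt_wf.fix fun α prev =>
    if h : ∃ hh : Ordinal → ℕ, FinTo α hh ∧ ∀ β (hβ : β < α), Coh β (prev β hβ) hh
    then h.choose else fun _ => 0

private lemma F_eq (α : Ordinal.{u}) : F α =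
    if h : ∃ hh : Ordinal.{u} → ℕ, FinTo α hh ∧ ∀ β (_ : β < α), Coh β (F β) hh
    then h.choose else fun _ => 0 := by
  rw [F, WellFounded.fix_eq]

private lemma F_spec : ∀ α : Ordinal.{u}, α < (aleph 1).ord →
    FinTo α (F α) ∧ ∀ β, β < α → Coh β (F β) (F α) := by
  intro α
  induction α using Ordinal.lt_wf.induction with
  | _ α IH =>
    intro hα
    have hex : ∃ hh : Ordinal.{u} → ℕ, FinTo α hh ∧ ∀ β (_ : β < α), Coh β (F β) hh := by
      apply step α hα (fun β _ => F β)
      · intro β hβ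
        exact (IH β hβ (hβ.trans hα)).1
      · intro β γ hβ hγ hle
        rcases eq_or_lt_of_le hle with rfl | hlt
        · exact coh_self β (F β)
        · exact (IH γ hγ (hγ.trans hα)).2 β hlt
    have hFα : F α = hex.choose := by rw [F_eq, dif_pos hex]
    rw [hFα]
    exact ⟨hex.choose_spec.1, fun β hβ => hex.choose_spec.2 β hβ⟩

end StmtEight

/-- Let `K` be a nontrivial abelian group.  Then there exists a family
`⟨φ_α : ω₁ × α → K | α < ω₁⟩` (represented as `φ : Ordinal → Ordinal → Ordinal → K`, where
`φ α η ξ` is of interest for `η < ω₁` and `ξ < α`) which is coherent modulo finitely many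
rows -- for `α ≤ β < ω₁` only finitely many rows `η < ω₁` contain a `ξ < α` with
`φ α η ξ ≠ φ β η ξ` -- but nontrivial: no `ψ : ω₁ × ω₁ → K` agrees with each `φ_α` off
finitely many rows. -/
theorem stmt_8 (K : Type*) [AddCommGroup K] [Nontrivial K] :
    ∃ φ : Ordinal → Ordinal → Ordinal → K,
      (∀ α β : Ordinal, α ≤ β → β < (aleph 1).ord →
        {η : Ordinal | η < (aleph 1).ord ∧ ∃ ξ < α, φ α η ξ ≠ φ β η ξ}.Finite) ∧
      ¬ ∃ ψ : Ordinal → Ordinal → K, ∀ α < (aleph 1).ord,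
          {η : Ordinal | η < (aleph 1).ord ∧ ∃ ξ < α, ψ η ξ ≠ φ α η ξ}.Finite := by
  obtain ⟨e, he⟩ := exists_ne (0 : K)
  refine ⟨fun α η ξ => if η < ((F α ξ : ℕ) : Ordinal) then e else 0, ?_, ?_⟩
  · -- coherence
    intro α β hαβ hβ
    have hD : {ξ : Ordinal | ξ < α ∧ F α ξ ≠ F β ξ}.Finite := by
      rcases eq_or_lt_of_le hαβ with rfl | hlt
      · exact coh_self α (F α)
      · exact (F_spec β hβ).2 α hlt
    refine (hD.biUnion (fun ξ _ => finite_Iio_natCast (max (F α ξ) (F β ξ)))).subset ?_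
    rintro η ⟨hη, ξ, hξα, hne⟩
    have hne' : (if η < ((F α ξ : ℕ) : Ordinal) then e else 0) ≠
        (if η < ((F β ξ : ℕ) : Ordinal) then e else 0) := hne
    have hFne : F α ξ ≠ F β ξ := by
      intro h; rw [h] at hne'; exact hne' rfl
    refine Set.mem_biUnion (⟨hξα, hFne⟩ :
      ξ ∈ {ξ : Ordinal | ξ < α ∧ F α ξ ≠ F β ξ}) ?_
    by_cases h1 : η < ((F α ξ : ℕ) : Ordinal)
    · refine Set.mem_Iio.mpr (lt_of_lt_of_le h1 ?_)
      exact_mod_cast le_max_left (F α ξ) (F β ξ)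
    · by_cases h2 : η < ((F β ξ : ℕ) : Ordinal)
      · refine Set.mem_Iio.mpr (lt_of_lt_of_le h2 ?_)
        exact_mod_cast le_max_right (F α ξ) (F β ξ)
      · rw [if_neg h1, if_neg h2] at hne'; exact absurd rfl hne'
  · -- nontriviality
    rintro ⟨ψ, hψ⟩
    have hlim : Order.IsSuccLimit ((aleph 1).ord) := Cardinal.isSuccLimit_ord aleph0_lt_aleph_one.le
    have hnat : ∀ n : ℕ, ((n : ℕ) : Ordinal) < (aleph 1).ord := by
      intro n
      refine (Ordinal.nat_lt_omega0 n).trans ?_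
      rw [← Cardinal.ord_aleph0]
      exact Cardinal.ord_lt_ord.mpr aleph0_lt_aleph_one
    -- the trace of ψ on the natural-number rows
    set Eset : Ordinal → Set ℕ := fun ξ => {n : ℕ | ψ ((n : ℕ) : Ordinal) ξ = e} with hEset
    have hEfin : ∀ ξ : Ordinal, ξ < (aleph 1).ord → (Eset ξ).Finite := by
      intro ξ hξ
      have hα : ξ + 1 < (aleph 1).ord := by
        rw [Ordinal.add_one_eq_succ]; exact hlim.succ_lt hξ
      have hB := hψ (ξ + 1) hα
      have hsub : Eset ξ ⊆
          {n : ℕ | ((n : ℕ) : Ordinal) ∈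
            {η : Ordinal | η < (aleph 1).ord ∧ ∃ ζ < ξ + 1,
              ψ η ζ ≠ (if η < ((F (ξ+1) ζ : ℕ) : Ordinal) then e else 0)}} ∪
          {n : ℕ | n < F (ξ+1) ξ} := by
        intro n hn
        by_cases hmem : ((n : ℕ) : Ordinal) ∈
            {η : Ordinal | η < (aleph 1).ord ∧ ∃ ζ < ξ + 1,
              ψ η ζ ≠ (if η < ((F (ξ+1) ζ : ℕ) : Ordinal) then e else 0)}
        · exact Or.inl hmem
        · right
          simp only [Set.mem_setOf_eq, not_and, not_exists] at hmem
          have hall := hmem (hnat n)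
          have hξlt : ξ < ξ + 1 := by
            rw [Ordinal.add_one_eq_succ]; exact Order.lt_succ ξ
          have heq := hall ξ
          simp only [hξlt, ne_eq, not_not, forall_true_left] at heq
          have hψval : ψ ((n : ℕ) : Ordinal) ξ = e := hn
          rw [heq] at hψval
          by_cases hcond : ((n : ℕ) : Ordinal) < ((F (ξ+1) ξ : ℕ) : Ordinal)
          · exact_mod_cast hcond
          · rw [if_neg hcond] at hψval
            exact absurd hψval.symm he
      refine (Set.Finite.union ?_ (Set.finite_Iio _)).subset hsub
      exact hB.preimage (Set.injOn_of_injective (fun a b hab => by exact_mod_cast hab))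
    -- fibers of the trace map
    set fib : Finset ℕ → Set Ordinal := fun s => {ξ | ξ < (aleph 1).ord ∧ Eset ξ = ↑s} with hfib
    have hfibex : ∃ s : Finset ℕ, ¬ (fib s).Countable := by
      by_contra hall
      push_neg at hall
      have hcnt : (Set.Iio ((aleph 1).ord) : Set Ordinal).Countable := by
        refine Set.Countable.mono ?_ (Set.countable_iUnion hall)
        intro ξ hξ
        rw [Set.mem_Iio] at hξ
        exact Set.mem_iUnion.mpr ⟨(hEfin ξ hξ).toFinset, hξ, by simp⟩
      have hlt := (Cardinal.countable_iff_lt_aleph_one _).mp hcnt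
      rw [Ordinal.mk_Iio_ordinal, Cardinal.card_ord] at hlt
      exact absurd hlt (not_lt.mpr (Cardinal.aleph_one_le_lift.mpr le_rfl))
    obtain ⟨s₀, hs₀⟩ := hfibex
    have hAinf : (fib s₀).Infinite := fun h => hs₀ h.countable
    set a : ℕ ↪ (fib s₀) := hAinf.natEmbedding with ha
    have hsup : (⨆ n : ℕ, ((a n : Ordinal))) < (aleph 1).ord :=
      by rw [Cardinal.ord_aleph]; exact Ordinal.iSup_lt_omega_one (fun n => by rw [← Cardinal.ord_aleph]; exact (a n).2.1)
    set α : Ordinal := (⨆ n : ℕ, ((a n : Ordinal))) + 1 with hα_def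
    have hα : α < (aleph 1).ord := by
      rw [hα_def, Ordinal.add_one_eq_succ]; exact hlim.succ_lt hsup
    have han : ∀ n : ℕ, ((a n : Ordinal)) < α := by
      intro n
      rw [hα_def, Ordinal.add_one_eq_succ, Order.lt_succ_iff]
      exact Ordinal.le_iSup (fun n : ℕ => ((a n : Ordinal))) n
    have hB := hψ α hα
    have hnatbad : {n : ℕ | ((n : ℕ) : Ordinal) ∈
        {η : Ordinal | η < (aleph 1).ord ∧ ∃ ζ < α,
          ψ η ζ ≠ (if η < ((F α ζ : ℕ) : Ordinal) then e else 0)}}.Finite :=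
      hB.preimage (Set.injOn_of_injective (fun a b hab => by exact_mod_cast hab))
    obtain ⟨n₁, hn₁⟩ := (Set.Finite.infinite_compl (hnatbad.union s₀.finite_toSet)).nonempty
    rw [Set.mem_compl_iff, Set.mem_union, not_or] at hn₁
    obtain ⟨hn₁bad, hn₁s⟩ := hn₁
    have hmem : ∀ k : ℕ, ((a k : Ordinal)) ∈ {ξ : Ordinal | ξ < α ∧ F α ξ ≤ n₁} := by
      intro k
      obtain ⟨hξω, hEξ⟩ := (a k).2
      set ξ : Ordinal := (a k : Ordinal)
      have hξα : ξ < α := han k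
      have hψne : ψ ((n₁ : ℕ) : Ordinal) ξ ≠ e := by
        intro hcontra
        exact hn₁s (by rw [← hEξ] at *; exact hcontra)
      simp only [Set.mem_setOf_eq, not_and, not_exists] at hn₁bad
      have hall := hn₁bad (hnat n₁)
      have heq := hall ξ
      simp only [hξα, ne_eq, not_not, forall_true_left] at heq
      refine ⟨hξα, ?_⟩
      by_cases hcond : ((n₁ : ℕ) : Ordinal) < ((F α ξ : ℕ) : Ordinal)
      · rw [heq, if_pos hcond] at hψne
        exact absurd rfl hψne
      · push_neg at hcond
        exact_mod_cast hcond
    have hinj : Function.Injective (fun k : ℕ => ((a k : Ordinal))) :=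
      fun x y hxy => a.injective (Subtype.coe_injective hxy)
    exact (Set.infinite_of_injective_forall_mem hinj hmem) ((F_spec α hα).1 n₁)
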